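/- Specialized Macdonald identity from 2-cores (Jacobi triple product form): Σ_{n≥1} (−1)^n T^{C(n,2)} (t^n − t^{1−n})/(1 − t) = (T;T)_∞ (tT;T)_∞ (T/t;T)_∞, as an identity of formal power series in T over ℚ(t), where (a;T)_∞ = Π_{k≥0}(1 − a T^k) and C(n,2) = n(n−1)/2. -/

import Mathlib

instance : TopologicalSpace (RatFunc ℚ) := ⊥

instance : TopologicalSpace (PowerSeries (RatFunc ℚ)) :=
  inferInstanceAs (TopologicalSpace ((Unit →₀ ℕ) → RatFunc ℚ))

namespace JTP

noncomputable abbrev K := RatFunc ℚ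
noncomputable def t : K := RatFunc.X

open PowerSeries Finset

instance : DiscreteTopology K := ⟨rfl⟩

instance : T2Space (PowerSeries K) := inferInstanceAs (T2Space ((Unit →₀ ℕ) → K))

lemma tendsto_iff_coeff {α : Type*} {l : Filter α} (F : α → PowerSeries K) (L : PowerSeries K) :
    Filter.Tendsto F l (nhds L) ↔
      ∀ d : ℕ, ∀ᶠ a in l, PowerSeries.coeff d (F a) = PowerSeries.coeff d L := by
  rw [show (nhds L) = @nhds ((Unit →₀ ℕ) → K) _ L from rfl]
  refine Iff.trans tendsto_pi_nhds ?_
  constructor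
  · intro h d
    have := h (Finsupp.single () d)
    rw [nhds_discrete, Filter.tendsto_pure] at this
    exact this
  · intro h d
    rw [nhds_discrete, Filter.tendsto_pure]
    have hd : d = Finsupp.single () (d ()) := by ext; simp
    rw [hd]
    exact h (d ())

lemma coeff_eq_of_dvd {A B : PowerSeries K} {d : ℕ} (h : (X:PowerSeries K)^(d+1) ∣ A - B) :
    coeff d A = coeff d B := by
  rw [X_pow_dvd_iff] at h
  have := h d (lt_add_one d)
  rw [map_sub, sub_eq_zero] at this
  exact this

lemma dvd_sub_one_prod {s : Finset ℕ} {g : ℕ → PowerSeries K} {D : ℕ}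
    (h : ∀ k ∈ s, (X:PowerSeries K)^D ∣ g k - 1) :
    (X:PowerSeries K)^D ∣ (∏ k ∈ s, g k) - 1 := by
  induction s using Finset.induction_on with
  | empty => simp
  | @insert a s' hx ih =>
    rw [prod_insert hx]
    have h1 : (X:PowerSeries K)^D ∣ g a - 1 := h a (mem_insert_self a s')
    have h2 := ih fun k hk => h k (mem_insert_of_mem hk)
    have : g a * ∏ k ∈ s', g k - 1 = (g a - 1) * ∏ k ∈ s', g k + ((∏ k ∈ s', g k) - 1) := by
      ring
    rw [this]
    exact dvd_add (Dvd.dvd.mul_right h1 _) h2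

lemma dvd_sub_mul {A A' B B' : PowerSeries K} {D : ℕ}
    (hA : (X:PowerSeries K)^D ∣ A - A') (hB : (X:PowerSeries K)^D ∣ B - B') :
    (X:PowerSeries K)^D ∣ A * B - A' * B' := by
  have : A * B - A' * B' = (A - A') * B + A' * (B - B') := by ring
  rw [this]
  exact dvd_add (hA.mul_right _) (hB.mul_left _)

/-- Limit of an infinite product whose k-th factor is ≡ 1 mod X^(k+1). -/
noncomputable def plimit (g : ℕ → PowerSeries K) : PowerSeries K :=
  PowerSeries.mk fun d => coeff d (∏ k ∈ range (d+1), g k)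

lemma plimit_dvd (g : ℕ → PowerSeries K) (h : ∀ k, (X:PowerSeries K)^(k+1) ∣ g k - 1)
    (D : ℕ) : (X:PowerSeries K)^D ∣ plimit g - ∏ k ∈ range D, g k := by
  rw [X_pow_dvd_iff]
  intro e he
  rw [map_sub, sub_eq_zero]
  have hsub : range (e+1) ⊆ range D := by
    intro x hx; simp only [mem_range] at *; omega
  rw [← Finset.prod_sdiff hsub]
  have htail : (X:PowerSeries K)^(e+1) ∣ (∏ k ∈ range D \ range (e+1), g k) - 1 := by
    apply dvd_sub_one_prod
    intro k hk
    simp only [mem_sdiff, mem_range] at hk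
    exact dvd_trans (pow_dvd_pow _ (by omega)) (h k)
  have : (X:PowerSeries K)^(e+1) ∣
      (∏ k ∈ range D \ range (e+1), g k) * ∏ k ∈ range (e+1), g k - ∏ k ∈ range (e+1), g k := by
    have heq : (∏ k ∈ range D \ range (e+1), g k) * (∏ k ∈ range (e+1), g k) - ∏ k ∈ range (e+1), g k
        = ((∏ k ∈ range D \ range (e+1), g k) - 1) * ∏ k ∈ range (e+1), g k := by ring
    rw [heq]; exact htail.mul_right _
  calc coeff e (plimit g) = coeff e (∏ k ∈ range (e+1), g k) := coeff_mk _ _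
    _ = _ := (coeff_eq_of_dvd this).symm

lemma hasProd_of (g : ℕ → PowerSeries K) (h : ∀ k, (X:PowerSeries K)^(k+1) ∣ g k - 1) :
    HasProd g (plimit g) := by
  rw [HasProd, tendsto_iff_coeff]
  intro d
  filter_upwards [Filter.eventually_ge_atTop (range (d+1))] with s hs
  rw [← Finset.prod_sdiff hs]
  have htail : (X:PowerSeries K)^(d+1) ∣ (∏ k ∈ s \ range (d+1), g k) - 1 := by
    apply dvd_sub_one_prod
    intro k hk
    simp only [mem_sdiff, mem_range] at hk
    exact dvd_trans (pow_dvd_pow _ (by omega)) (h k)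
  have hdvd : (X:PowerSeries K)^(d+1) ∣
      (∏ k ∈ s \ range (d+1), g k) * (∏ k ∈ range (d+1), g k) - ∏ k ∈ range (d+1), g k := by
    have heq : (∏ k ∈ s \ range (d+1), g k) * (∏ k ∈ range (d+1), g k) - ∏ k ∈ range (d+1), g k
        = ((∏ k ∈ s \ range (d+1), g k) - 1) * ∏ k ∈ range (d+1), g k := by ring
    rw [heq]; exact htail.mul_right _
  rw [coeff_eq_of_dvd hdvd]
  simp only [plimit, coeff_mk]

/-- Limit of the sum. -/
noncomputable def slimit (f : ℕ → PowerSeries K) : PowerSeries K :=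
  PowerSeries.mk fun d => coeff d (∑ n ∈ range (d+1), f n)

lemma hasSum_of (f : ℕ → PowerSeries K) (h : ∀ n d, d < n → coeff d (f n) = 0) :
    HasSum f (slimit f) := by
  rw [HasSum, tendsto_iff_coeff]
  intro d
  filter_upwards [Filter.eventually_ge_atTop (range (d+1))] with s hs
  rw [← Finset.sum_sdiff hs, map_add, map_sum]
  simp only [slimit, coeff_mk, map_sum]
  have : ∑ n ∈ s \ range (d+1), coeff d (f n) = 0 := by
    apply Finset.sum_eq_zero
    intro n hn
    simp only [mem_sdiff, mem_range] at hn
    exact h n d (by omega)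
  rw [this, zero_add]

/-- triangular-number exponent -/
def w (j : ℤ) : ℕ := ((j*(j+1))/2).toNat

lemma w_nonneg (j : ℤ) : 0 ≤ j * (j+1) := by nlinarith [sq_nonneg (2*j+1)]

lemma two_w (j : ℤ) : 2 * (w j : ℤ) = j * (j+1) := by
  have h2 : (2:ℤ) ∣ j*(j+1) := (Int.even_mul_succ_self j).two_dvd
  rw [w, Int.toNat_of_nonneg (Int.ediv_nonneg (w_nonneg j) (by norm_num))]
  exact Int.mul_ediv_cancel' h2

/-- Gaussian binomial via Pascal recursion -/
noncomputable def Q : ℕ → ℤ → PowerSeries K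
  | 0, k => if k = 0 then 1 else 0
  | (n+1), k => Q n (k-1) + (X:PowerSeries K)^(k.toNat) * Q n k

lemma Q_zero_def (k : ℤ) : Q 0 k = if k = 0 then 1 else 0 := rfl

lemma Q_succ (n : ℕ) (k : ℤ) :
    Q (n+1) k = Q n (k-1) + (X:PowerSeries K)^(k.toNat) * Q n k := rfl

lemma Q_neg (n : ℕ) : ∀ k : ℤ, k < 0 → Q n k = 0 := by
  induction n with
  | zero => intro k hk; rw [Q_zero_def]; simp [show k ≠ 0 by omega]
  | succ n ih => intro k hk; rw [Q_succ, ih k hk, ih (k-1) (by omega)]; simp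

lemma Q_zero (n : ℕ) : Q n 0 = 1 := by
  induction n with
  | zero => rw [Q_zero_def]; simp
  | succ n ih => rw [Q_succ, ih, Q_neg n (0-1) (by omega)]; simp

lemma Q_gt (n : ℕ) : ∀ k : ℤ, (n:ℤ) < k → Q n k = 0 := by
  induction n with
  | zero => intro k hk; rw [Q_zero_def]; simp [show k ≠ 0 by omega]
  | succ n ih => intro k hk; rw [Q_succ, ih k (by push_cast; omega), ih (k-1) (by push_cast; omega)]; simp

lemma Q_pascal2 (n : ℕ) : ∀ k : ℤ,
    Q (n+1) k = Q n k + (X:PowerSeries K)^(((n:ℤ)+1-k).toNat) * Q n (k-1) := by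
  induction n with
  | zero =>
    intro k
    rcases eq_or_ne k 0 with rfl | h0
    · simp [Q_succ, Q_zero_def]
    rcases eq_or_ne k 1 with rfl | h1
    · norm_num [Q_succ, Q_zero_def]
    · rw [Q_succ, Q_zero_def, Q_zero_def]
      simp [h0, show k - 1 ≠ 0 by omega]
  | succ n ih =>
    intro k
    calc Q (n+1+1) k = Q (n+1) (k-1) + (X:PowerSeries K)^(k.toNat) * Q (n+1) k := Q_succ _ _
      _ = (Q n (k-1) + (X:PowerSeries K)^(((n:ℤ)+1-(k-1)).toNat) * Q n (k-1-1))
          + (X:PowerSeries K)^(k.toNat) *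
            (Q n k + (X:PowerSeries K)^(((n:ℤ)+1-k).toNat) * Q n (k-1)) := by
          rw [ih (k-1), ih k]
      _ = Q (n+1) k + (X:PowerSeries K)^((((n+1:ℕ):ℤ)+1-k).toNat) * Q (n+1) (k-1) := by
          rw [Q_succ n k, Q_succ n (k-1)]
          have e2 : (((n:ℤ))+1-(k-1)).toNat = (((n+1:ℕ):ℤ)+1-k).toNat := by push_cast; omega
          have key : (X:PowerSeries K)^(k.toNat) * ((X:PowerSeries K)^(((n:ℤ)+1-k).toNat) * Q n (k-1))
              = (X:PowerSeries K)^((((n+1:ℕ):ℤ)+1-k).toNat)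
                * ((X:PowerSeries K)^((k-1).toNat) * Q n (k-1)) := by
            rcases le_or_gt k 0 with h | h
            · rw [Q_neg n (k-1) (by omega)]; simp
            rcases le_or_gt k ((n:ℤ)+1) with h' | h'
            · rw [← mul_assoc, ← mul_assoc, ← pow_add, ← pow_add]
              congr 2
              push_cast
              omega
            · rw [Q_gt n (k-1) (by omega)]; simp
          rw [e2]
          linear_combination key
lemma w_succ (j : ℤ) : (w (j+1) : ℤ) = w j + (j+1) := by
  have h : 2 * ((w (j+1):ℤ)) = 2 * ((w j:ℤ) + (j+1)) := by
    linear_combination two_w (j+1) - two_w j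
  omega

lemma Qexpand (m : ℕ) (k : ℤ) : Q (2*m+2) k
    = Q (2*m) (k-1) + (X:PowerSeries K)^((((2*m:ℕ):ℤ)+1-(k-1)).toNat) * Q (2*m) (k-1-1)
      + (X:PowerSeries K)^(k.toNat) *
        (Q (2*m) k + (X:PowerSeries K)^((((2*m:ℕ):ℤ)+1-k).toNat) * Q (2*m) (k-1)) := by
  rw [show 2*m+2 = (2*m+1)+1 by ring, Q_succ, Q_pascal2 (2*m) (k-1), Q_pascal2 (2*m) k]

lemma sum_shift {M : Type*} [AddCommMonoid M] (a b c : ℤ) (f : ℤ → M) :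
    ∑ k ∈ Icc a b, f k = ∑ k ∈ Icc (a+c) (b+c), f (k - c) := by
  rw [← Finset.map_add_right_Icc a b c, Finset.sum_map]
  simp

lemma sum_trim (a b : ℤ) (f : ℤ → PowerSeries K) (a' b' : ℤ) (ha : a ≤ a') (hb : b' ≤ b)
    (h : ∀ k, a ≤ k → k ≤ b → (k < a' ∨ b' < k) → f k = 0) :
    ∑ k ∈ Icc a' b', f k = ∑ k ∈ Icc a b, f k := by
  apply Finset.sum_subset (Icc_subset_Icc ha hb)
  intro k hk hk'
  simp only [mem_Icc] at hk hk'
  exact h k hk.1 hk.2 (by omega)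

noncomputable def Fm (x : K) (m : ℕ) (k : ℤ) : PowerSeries K :=
  Q (2*m) k * PowerSeries.C (R := K) (x ^ (k - m)) * (X:PowerSeries K) ^ (w (k - m))

noncomputable def g1 (x : K) (m : ℕ) (k : ℤ) : PowerSeries K := Fm x m (k-1)

noncomputable def g2 (x : K) (m : ℕ) (k : ℤ) : PowerSeries K :=
  (X:PowerSeries K)^((((2*m:ℕ):ℤ)+1-(k-1)).toNat) * Q (2*m) (k-1-1)
    * PowerSeries.C (R := K) (x^(k-1-(m:ℤ))) * (X:PowerSeries K)^(w (k-1-(m:ℤ)))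

noncomputable def g3 (x : K) (m : ℕ) (k : ℤ) : PowerSeries K :=
  (X:PowerSeries K)^(k.toNat) * Q (2*m) k
    * PowerSeries.C (R := K) (x^(k-1-(m:ℤ))) * (X:PowerSeries K)^(w (k-1-(m:ℤ)))

noncomputable def g4 (x : K) (m : ℕ) (k : ℤ) : PowerSeries K :=
  (X:PowerSeries K)^(k.toNat) * (X:PowerSeries K)^((((2*m:ℕ):ℤ)+1-k).toNat) * Fm x m (k-1)

lemma hsplit (x : K) (m : ℕ) (k : ℤ) :
    Fm x (m+1) k = g1 x m k + g2 x m k + g3 x m k + g4 x m k := by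
  simp only [g1, g2, g3, g4, Fm]
  rw [show 2*(m+1) = 2*m+2 by ring, Qexpand,
    show (((m+1:ℕ)):ℤ) = (m:ℤ)+1 by push_cast; ring,
    show k - ((m:ℤ)+1) = k-1-(m:ℤ) by ring]
  ring

lemma hsum1 (x : K) (m : ℕ) :
    ∑ k ∈ Icc (0:ℤ) (2*(m:ℤ)+2), g1 x m k = ∑ k ∈ Icc (0:ℤ) (2*(m:ℤ)), Fm x m k := by
  have h1 : ∑ k ∈ Icc (1:ℤ) (2*(m:ℤ)+1), g1 x m k = ∑ k ∈ Icc (0:ℤ) (2*(m:ℤ)+2), g1 x m k := by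
    apply sum_trim 0 (2*(m:ℤ)+2) (g1 x m) 1 (2*(m:ℤ)+1) (by omega) (by omega)
    intro k _ _ hk
    simp only [g1, Fm]
    rcases hk with hk | hk
    · rw [Q_neg (2*m) (k-1) (by omega), zero_mul, zero_mul]
    · rw [Q_gt (2*m) (k-1) (by push_cast; omega), zero_mul, zero_mul]
  rw [← h1, sum_shift 0 (2*(m:ℤ)) 1 (Fm x m), show (0:ℤ)+1 = 1 by ring]
  exact Finset.sum_congr rfl fun k _ => by simp only [g1]

lemma hsum2 (x : K) (hx : x ≠ 0) (m : ℕ) :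
    ∑ k ∈ Icc (0:ℤ) (2*(m:ℤ)+2), g2 x m k
      = (∑ k ∈ Icc (0:ℤ) (2*(m:ℤ)), Fm x m k) * (PowerSeries.C (R := K) x * (X:PowerSeries K)^(m+1)) := by
  rw [Finset.sum_mul,
    sum_shift 0 (2*(m:ℤ)) 2 (fun k => Fm x m k * (PowerSeries.C (R := K) x * (X:PowerSeries K)^(m+1))),
    show (0:ℤ)+2 = 2 by ring]
  rw [sum_trim 0 (2*(m:ℤ)+2) _ 2 (2*(m:ℤ)+2) (by omega) (by omega) ?side]
  case side =>
    intro k _ _ hk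
    rcases hk with hk | hk
    · show Fm x m (k-2) * _ = 0
      simp only [Fm]
      rw [Q_neg (2*m) (k-2) (by omega), zero_mul, zero_mul, zero_mul]
    · omega
  apply Finset.sum_congr rfl
  intro k hk
  simp only [mem_Icc] at hk
  show g2 x m k = Fm x m (k-2) * (PowerSeries.C (R := K) x * (X:PowerSeries K)^(m+1))
  simp only [g2, Fm]
  rw [show k-1-1 = k-2 by ring]
  have hc : PowerSeries.C (R := K) (x^(k-2-(m:ℤ))) * PowerSeries.C (R := K) x
      = PowerSeries.C (R := K) (x^(k-1-(m:ℤ))) := by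
    rw [← map_mul, ← zpow_add_one₀ hx, show k-2-(m:ℤ)+1 = k-1-(m:ℤ) by ring]
  have hw := w_succ (k-2-(m:ℤ))
  rw [show k-2-(m:ℤ)+1 = k-1-(m:ℤ) by ring] at hw
  have hsplitX : (X:PowerSeries K)^((((2*m:ℕ):ℤ)+1-(k-1)).toNat)
        * (X:PowerSeries K)^(w (k-1-(m:ℤ)))
      = (X:PowerSeries K)^(w (k-2-(m:ℤ))) * (X:PowerSeries K)^(m+1) := by
    rw [← pow_add, ← pow_add]
    congr 1
    push_cast at *
    omega
  linear_combination (Q (2*m) (k-2) * PowerSeries.C (R := K) (x^(k-1-(m:ℤ)))) * hsplitX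
    - Q (2*m) (k-2) * ((X:PowerSeries K)^(w (k-2-(m:ℤ))) * (X:PowerSeries K)^(m+1)) * hc

lemma hsum3 (x : K) (hx : x ≠ 0) (m : ℕ) :
    ∑ k ∈ Icc (0:ℤ) (2*(m:ℤ)+2), g3 x m k
      = (∑ k ∈ Icc (0:ℤ) (2*(m:ℤ)), Fm x m k) * (PowerSeries.C (R := K) x⁻¹ * (X:PowerSeries K)^m) := by
  rw [Finset.sum_mul]
  rw [sum_trim 0 (2*(m:ℤ)+2) _ 0 (2*(m:ℤ)) (by omega) (by omega) ?side]
  case side =>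
    intro k _ _ hk
    rcases hk with hk | hk
    · omega
    · show Fm x m k * _ = 0
      simp only [Fm]
      rw [Q_gt (2*m) k (by push_cast; omega), zero_mul, zero_mul, zero_mul]
  apply Finset.sum_congr rfl
  intro k hk
  simp only [mem_Icc] at hk
  show g3 x m k = Fm x m k * (PowerSeries.C (R := K) x⁻¹ * (X:PowerSeries K)^m)
  simp only [g3, Fm]
  have hc : PowerSeries.C (R := K) (x^(k-(m:ℤ))) * PowerSeries.C (R := K) x⁻¹
      = PowerSeries.C (R := K) (x^(k-1-(m:ℤ))) := by
    rw [← map_mul, ← zpow_sub_one₀ hx, show k-(m:ℤ)-1 = k-1-(m:ℤ) by ring]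
  have hw := w_succ (k-1-(m:ℤ))
  rw [show k-1-(m:ℤ)+1 = k-(m:ℤ) by ring] at hw
  have hsplitX : (X:PowerSeries K)^(k.toNat) * (X:PowerSeries K)^(w (k-1-(m:ℤ)))
      = (X:PowerSeries K)^(w (k-(m:ℤ))) * (X:PowerSeries K)^m := by
    rw [← pow_add, ← pow_add]
    congr 1
    omega
  linear_combination (Q (2*m) k * PowerSeries.C (R := K) (x^(k-1-(m:ℤ)))) * hsplitX
    - Q (2*m) k * ((X:PowerSeries K)^(w (k-(m:ℤ))) * (X:PowerSeries K)^m) * hc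

lemma hsum4 (x : K) (hx : x ≠ 0) (m : ℕ) :
    ∑ k ∈ Icc (0:ℤ) (2*(m:ℤ)+2), g4 x m k
      = (∑ k ∈ Icc (0:ℤ) (2*(m:ℤ)), Fm x m k)
        * ((PowerSeries.C (R := K) x * (X:PowerSeries K)^(m+1))
          * (PowerSeries.C (R := K) x⁻¹ * (X:PowerSeries K)^m)) := by
  rw [Finset.sum_mul,
    sum_shift 0 (2*(m:ℤ)) 1 (fun k => Fm x m k * ((PowerSeries.C (R := K) x * (X:PowerSeries K)^(m+1))
      * (PowerSeries.C (R := K) x⁻¹ * (X:PowerSeries K)^m))),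
    show (0:ℤ)+1 = 1 by ring]
  rw [sum_trim 0 (2*(m:ℤ)+2) _ 1 (2*(m:ℤ)+1) (by omega) (by omega) ?side]
  case side =>
    intro k _ _ hk
    show Fm x m (k-1) * _ = 0
    simp only [Fm]
    rcases hk with hk | hk
    · rw [Q_neg (2*m) (k-1) (by omega), zero_mul, zero_mul, zero_mul]
    · rw [Q_gt (2*m) (k-1) (by push_cast; omega), zero_mul, zero_mul, zero_mul]
  apply Finset.sum_congr rfl
  intro k hk
  simp only [mem_Icc] at hk
  show g4 x m k = Fm x m (k-1) * ((PowerSeries.C (R := K) x * (X:PowerSeries K)^(m+1))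
      * (PowerSeries.C (R := K) x⁻¹ * (X:PowerSeries K)^m))
  rcases eq_or_lt_of_le hk.2 with heq | hlt
  · have hF : Fm x m (k-1) = 0 := by
      simp only [Fm]
      rw [Q_gt (2*m) (k-1) (by push_cast; omega), zero_mul, zero_mul]
    simp only [g4, hF, mul_zero, zero_mul]
  simp only [g4]
  have hc : PowerSeries.C (R := K) x * PowerSeries.C (R := K) x⁻¹ = 1 := by
    rw [← map_mul, mul_inv_cancel₀ hx, map_one]
  have hsplitX : (X:PowerSeries K)^(k.toNat) * (X:PowerSeries K)^((((2*m:ℕ):ℤ)+1-k).toNat)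
      = (X:PowerSeries K)^(m+1) * (X:PowerSeries K)^m := by
    rw [← pow_add, ← pow_add]
    congr 1
    push_cast at *
    omega
  linear_combination (Fm x m (k-1)) * hsplitX
    - (Fm x m (k-1) * ((X:PowerSeries K)^(m+1) * (X:PowerSeries K)^m)) * hc

theorem finJTP (x : K) (hx : x ≠ 0) (m : ℕ) :
    ∏ k ∈ range m, ((1 + PowerSeries.C (R := K) x * X^(k+1)) * (1 + PowerSeries.C (R := K) x⁻¹ * X^k))
      = ∑ k ∈ Icc (0:ℤ) (2*(m:ℤ)), Fm x m k := by
  induction m with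
  | zero =>
    simp only [Nat.cast_zero, mul_zero, Icc_self, sum_singleton, range_zero, prod_empty]
    simp [Fm, Q_zero, w]
  | succ m ih =>
    rw [prod_range_succ, ih, show (((m+1:ℕ)):ℤ) = (m:ℤ)+1 by push_cast; ring,
      show 2*((m:ℤ)+1) = 2*(m:ℤ)+2 by ring]
    have : ∑ k ∈ Icc (0:ℤ) (2*(m:ℤ)+2), Fm x (m+1) k
        = ∑ k ∈ Icc (0:ℤ) (2*(m:ℤ)+2), (g1 x m k + g2 x m k + g3 x m k + g4 x m k) :=
      Finset.sum_congr rfl fun k _ => hsplit x m k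
    rw [this, Finset.sum_add_distrib, Finset.sum_add_distrib, Finset.sum_add_distrib,
      hsum1 x m, hsum2 x hx m, hsum3 x hx m, hsum4 x hx m]
    ring
noncomputable def D (r : ℕ) : PowerSeries K :=
  ∏ i ∈ range r, (1 - (X:PowerSeries K)^(i+1))

lemma D_succ (r : ℕ) : D (r+1) = D r * (1 - (X:PowerSeries K)^(r+1)) :=
  prod_range_succ _ _

lemma D_const (r : ℕ) : constantCoeff (R := K) (D r) = 1 := by
  rw [D, map_prod]
  apply Finset.prod_eq_one
  intro i _
  simp

lemma D_unit (r : ℕ) : IsUnit (D r) := by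
  apply IsUnit.of_mul_eq_one (D r)⁻¹
  exact PowerSeries.mul_inv_cancel _ (by rw [D_const]; norm_num)

lemma QD (n : ℕ) : ∀ k : ℕ, k ≤ n → Q n (k:ℤ) * D k * D (n-k) = D n := by
  induction n with
  | zero =>
    intro k hk
    interval_cases k
    simp [Q_zero, D]
  | succ n ih =>
    intro k hk
    match k with
    | 0 => simp [Q_zero, D]
    | (k'+1) =>
      have hQ : Q (n+1) ((k'+1 : ℕ):ℤ)
          = Q n (k':ℤ) + (X:PowerSeries K)^(k'+1) * Q n ((k':ℤ)+1) := by
        rw [show (((k'+1 : ℕ)):ℤ) = (k':ℤ)+1 by push_cast; ring, Q_succ]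
        norm_num
      rcases eq_or_lt_of_le (show k' ≤ n by omega) with rfl | hlt
      · rw [hQ, Q_gt k' ((k':ℤ)+1) (by omega)]
        have h1 := ih k' le_rfl
        rw [Nat.sub_self] at h1
        rw [show k'+1-(k'+1) = 0 by omega]
        rw [show (k'+1) = k'+1 from rfl, D_succ k']
        linear_combination (1 - (X:PowerSeries K)^(k'+1)) * h1
      · -- k' + 1 ≤ n
        have h1 := ih k' (by omega)
        have h2 := ih (k'+1) (by omega)
        have hDk : D (k'+1) = D k' * (1 - (X:PowerSeries K)^(k'+1)) := D_succ k'
        have hD2 : D (n-k') = D (n-(k'+1)) * (1 - (X:PowerSeries K)^(n-k')) := by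
          rw [show n-k' = (n-(k'+1))+1 by omega, D_succ, show n-(k'+1)+1 = n-k' by omega]
        have hX : (X:PowerSeries K)^(k'+1) * (X:PowerSeries K)^(n-k')
            = (X:PowerSeries K)^(n+1) := by rw [← pow_add]; congr 1; omega
        rw [hQ, show n+1-(k'+1) = n-k' by omega, hD2, hDk]
        rw [hD2] at h1
        rw [hDk] at h2
        rw [D_succ n]
        rw [show ((k':ℤ)+1) = (((k'+1:ℕ)):ℤ) by push_cast; ring]
        linear_combination (1 - (X:PowerSeries K)^(k'+1)) * h1
          + (X:PowerSeries K)^(k'+1) * (1 - (X:PowerSeries K)^(n-k')) * h2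
          - (D n) * hX

lemma dvd_D_sub {m r : ℕ} (h : m ≤ r) : (X:PowerSeries K)^(m+1) ∣ D r - D m := by
  rw [D, D, ← Finset.prod_range_mul_prod_Ico _ h]
  have : (∏ i ∈ range m, (1 - (X:PowerSeries K)^(i+1)))
        * (∏ i ∈ Ico m r, (1 - (X:PowerSeries K)^(i+1)))
        - ∏ i ∈ range m, (1 - (X:PowerSeries K)^(i+1))
      = (∏ i ∈ range m, (1 - (X:PowerSeries K)^(i+1)))
        * ((∏ i ∈ Ico m r, (1 - (X:PowerSeries K)^(i+1))) - 1) := by ring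
  rw [this]
  apply Dvd.dvd.mul_left
  apply dvd_sub_one_prod
  intro i hi
  simp only [mem_Ico] at hi
  rw [show (1:PowerSeries K) - X^(i+1) - 1 = -(X^(i+1)) by ring]
  exact (pow_dvd_pow _ (by omega)).neg_right
-- triangular facts
lemma two_choose (n : ℕ) : 2 * ((n+1).choose 2) = n * (n+1) := by
  have h2 : 2 ∣ (n+1)*n := by simpa [mul_comm] using (Nat.even_mul_succ_self n).two_dvd
  rw [Nat.choose_two_right, Nat.succ_sub_one, Nat.mul_div_cancel' h2]
  ring

lemma w_nat (n : ℕ) : w (n:ℤ) = (n+1).choose 2 := by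
  have h1 := two_w (n:ℤ)
  have h3 : (n:ℤ) * ((n:ℤ)+1) = ((n * (n+1) : ℕ) : ℤ) := by push_cast; ring
  rw [h3, ← two_choose n] at h1
  omega

lemma w_negsucc (n : ℕ) : w (-(n:ℤ)-1) = (n+1).choose 2 := by
  have h1 := two_w (-(n:ℤ)-1)
  have h3 : (-(n:ℤ)-1) * ((-(n:ℤ)-1)+1) = ((n * (n+1) : ℕ) : ℤ) := by push_cast; ring
  rw [h3, ← two_choose n] at h1
  omega

lemma le_w_pos (j : ℤ) (h : 0 ≤ j) : j ≤ (w j : ℤ) := by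
  have h1 := two_w j
  nlinarith

lemma le_w_neg (j : ℤ) (h : j ≤ -1) : -j - 1 ≤ (w j : ℤ) := by
  have h1 := two_w j
  nlinarith

lemma tri_strictMono : StrictMono (fun n : ℕ => (n+1).choose 2) := by
  apply strictMono_nat_of_lt_succ
  intro n
  have h1 := two_choose n
  have h2 := two_choose (n+1)
  rw [show (n+1)*(n+1+1) = n*(n+1) + 2*(n+1) by ring] at h2
  generalize n*(n+1) = P at h1 h2
  omega

-- the key congruence
lemma QD_one (d a b : ℕ) (ha : d+1 ≤ a) (hb : d+1 ≤ b) :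
    (X:PowerSeries K)^(d+1) ∣ Q (a+b) (a:ℤ) * D (d+1) - 1 := by
  have h := QD (a+b) a (Nat.le_add_right a b)
  rw [show a+b-a = b by omega] at h
  have hEa : (X:PowerSeries K)^(d+1) ∣ D a - D (d+1) :=
    dvd_trans (pow_dvd_pow _ (by omega)) (dvd_D_sub ha)
  have hEb : (X:PowerSeries K)^(d+1) ∣ D b - D (d+1) :=
    dvd_trans (pow_dvd_pow _ (by omega)) (dvd_D_sub hb)
  have hEc : (X:PowerSeries K)^(d+1) ∣ D (a+b) - D (d+1) :=
    dvd_trans (pow_dvd_pow _ (by omega)) (dvd_D_sub (by omega))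
  have key : (X:PowerSeries K)^(d+1) ∣ D (d+1) * (Q (a+b) (a:ℤ) * D (d+1) - 1) := by
    have heq : D (d+1) * (Q (a+b) (a:ℤ) * D (d+1) - 1)
        = (D (a+b) - D (d+1))
          - Q (a+b) (a:ℤ) * (D (d+1) * (D b - D (d+1)) + D b * (D a - D (d+1))) := by
      linear_combination h
    rw [heq]
    exact dvd_sub hEc (Dvd.dvd.mul_left
      (dvd_add (Dvd.dvd.mul_left hEb (D (d+1))) (Dvd.dvd.mul_left hEa (D b)))
      (Q (a+b) (a:ℤ)))
  exact (IsUnit.dvd_mul_left (D_unit (d+1))).mp key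

-- field facts
lemma t_ne_zero : (t : K) ≠ 0 := RatFunc.X_ne_zero
lemma t_ne_one : (t : K) ≠ 1 := by
  intro h
  have h2 : algebraMap (Polynomial ℚ) K Polynomial.X = algebraMap (Polynomial ℚ) K 1 := by
    rw [RatFunc.algebraMap_X, map_one]
    exact h
  have h3 := IsFractionRing.injective (Polynomial ℚ) K h2
  have h4 := congrArg Polynomial.natDegree h3
  simp at h4
lemma one_sub_t_ne : (1 : K) - t ≠ 0 := sub_ne_zero.mpr (Ne.symm t_ne_one)
lemma one_sub_tinv_ne : (1 : K) - t⁻¹ ≠ 0 := by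
  rw [sub_ne_zero]
  intro h
  exact t_ne_one (by rw [← inv_inv (t:K), ← h, inv_one])

lemma n_le_tri (n : ℕ) : n ≤ (n+1).choose 2 := by
  have h := two_choose n
  nlinarith

lemma hfC (n : ℕ) : (-1 : PowerSeries K)^(n+1) * (X:PowerSeries K)^((n+1).choose 2)
      * PowerSeries.C (R := K) ((t^(n+1) - (t^n)⁻¹)/(1-t))
    = PowerSeries.C (R := K) ((-1)^(n+1) * ((t^(n+1) - (t^n)⁻¹)/(1-t)))
      * (X:PowerSeries K)^((n+1).choose 2) := by
  rw [map_mul, map_pow, map_neg, map_one]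
  ring

lemma hterm (d : ℕ) (k : ℤ) (hk0 : 0 ≤ k) (hk2 : k ≤ 2*((2*d+2:ℕ):ℤ)) :
    PowerSeries.coeff d (D (d+1) * Fm (-t) (2*d+2) k)
      = if w (k - ((2*d+2:ℕ):ℤ)) = d then (-t)^(k - ((2*d+2:ℕ):ℤ)) else 0 := by
  have hre : D (d+1) * Fm (-t) (2*d+2) k
      = (Q (2*(2*d+2)) k * D (d+1) * PowerSeries.C (R := K) ((-t)^(k - ((2*d+2:ℕ):ℤ))))
        * (X:PowerSeries K)^(w (k - ((2*d+2:ℕ):ℤ))) := by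
    simp only [Fm]
    ring
  rw [hre, coeff_mul_X_pow']
  rcases le_or_gt (w (k - ((2*d+2:ℕ):ℤ))) d with hw | hw
  · rw [if_pos hw]
    have hb : -((d:ℤ)+1) ≤ k - ((2*d+2:ℕ):ℤ) ∧ k - ((2*d+2:ℕ):ℤ) ≤ (d:ℤ)+1 := by
      rcases le_or_gt 0 (k - ((2*d+2:ℕ):ℤ)) with h | h
      · have h2 := le_w_pos _ h
        omega
      · have h2 := le_w_neg (k - ((2*d+2:ℕ):ℤ)) (by omega)
        omega
    have ha1 : d+1 ≤ k.toNat := by push_cast at hb; omega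
    have ha2 : d+1 ≤ 2*(2*d+2) - k.toNat := by push_cast at hb ⊢; omega
    have hQ1 := QD_one d k.toNat (2*(2*d+2) - k.toNat) ha1 ha2
    rw [show k.toNat + (2*(2*d+2) - k.toNat) = 2*(2*d+2) by push_cast at hb; omega,
      Int.toNat_of_nonneg hk0] at hQ1
    have hd5 : (X:PowerSeries K)^((d - w (k - ((2*d+2:ℕ):ℤ)))+1)
        ∣ Q (2*(2*d+2)) k * D (d+1) * PowerSeries.C (R := K) ((-t)^(k - ((2*d+2:ℕ):ℤ)))
          - PowerSeries.C (R := K) ((-t)^(k - ((2*d+2:ℕ):ℤ))) := by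
      have hsh : Q (2*(2*d+2)) k * D (d+1) * PowerSeries.C (R := K) ((-t)^(k - ((2*d+2:ℕ):ℤ)))
            - PowerSeries.C (R := K) ((-t)^(k - ((2*d+2:ℕ):ℤ)))
          = (Q (2*(2*d+2)) k * D (d+1) - 1)
            * PowerSeries.C (R := K) ((-t)^(k - ((2*d+2:ℕ):ℤ))) := by ring
      rw [hsh]
      exact dvd_trans (pow_dvd_pow _ (by omega)) (hQ1.mul_right _)
    rw [coeff_eq_of_dvd hd5, PowerSeries.coeff_C]
    split_ifs with h1 h2 h3
    · rfl
    · omega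
    · omega
    · rfl
  · rw [if_neg (by omega), if_neg (by omega)]
lemma scalar_id (n : ℕ) :
    (-t)^((n:ℤ)) + (-t)^(-(n:ℤ)-1)
      = (1-t⁻¹) * ((-1)^(n+1) * ((t^(n+1) - (t^n)⁻¹)/(1-t))) := by
  have hx : (-t : K) ≠ 0 := neg_ne_zero.mpr t_ne_zero
  rw [show (-(n:ℤ)-1) = -(((n+1:ℕ)):ℤ) by push_cast; ring, zpow_neg, zpow_natCast, zpow_natCast]
  rw [neg_pow t n, neg_pow t (n+1)]
  have h1 : ((-1:K)^(n+1) * t^(n+1))⁻¹ = (-1)^(n+1) * (t^(n+1))⁻¹ := by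
    rw [mul_inv]
    rcases Nat.even_or_odd (n+1) with h | h
    · rw [h.neg_one_pow]; simp
    · rw [h.neg_one_pow]; norm_num
  rw [h1]
  have h2 : ((-1:K)^(n+1)) = -((-1:K)^n) := by rw [pow_succ]; ring
  rw [h2]
  field_simp [t_ne_zero, one_sub_t_ne]
  ring

lemma pairing (d : ℕ) :
    ∑ j ∈ Icc (-((2*d+2:ℕ):ℤ)) ((2*d+2:ℕ):ℤ), (if w j = d then (-t)^j else 0)
      = (1-t⁻¹) * ∑ n ∈ range (d+1),
          (if (n+1).choose 2 = d
            then ((-1:K)^(n+1) * ((t^(n+1) - (t^n)⁻¹)/(1-t))) else 0) := by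
  by_cases hex : ∃ n : ℕ, (n+1).choose 2 = d
  · obtain ⟨n₀, hn₀⟩ := hex
    have hn₀d : n₀ ≤ d := hn₀ ▸ n_le_tri n₀
    -- RHS sum is a single term
    have hR : ∑ n ∈ range (d+1),
          (if (n+1).choose 2 = d
            then ((-1:K)^(n+1) * ((t^(n+1) - (t^n)⁻¹)/(1-t))) else 0)
        = (-1:K)^(n₀+1) * ((t^(n₀+1) - (t^n₀)⁻¹)/(1-t)) := by
      rw [Finset.sum_eq_single_of_mem n₀ (by simp [mem_range]; omega) ?h0, if_pos hn₀]
      case h0 =>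
        intro n _ hne
        rw [if_neg]
        intro hc
        exact hne (tri_strictMono.injective (hc.trans hn₀.symm))
    -- LHS sum has exactly two terms
    have hL : ∀ j ∈ Icc (-((2*d+2:ℕ):ℤ)) ((2*d+2:ℕ):ℤ),
        (if w j = d then (-t)^j else 0)
          = (if j = (n₀:ℤ) then (-t)^j else 0) + (if j = -(n₀:ℤ)-1 then (-t)^j else 0) := by
      intro j _
      by_cases hj : w j = d
      · rw [if_pos hj]
        have hor : j = (n₀:ℤ) ∨ j = -(n₀:ℤ)-1 := by
          rcases le_or_gt 0 j with h | h
          · left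
            have : w ((j.toNat : ℤ)) = d := by rw [Int.toNat_of_nonneg h]; exact hj
            rw [w_nat] at this
            have := tri_strictMono.injective (this.trans hn₀.symm)
            omega
          · right
            have h2 : j = -(((-j-1).toNat : ℤ)) - 1 := by omega
            have : w (-(((-j-1).toNat : ℤ)) - 1) = d := by rw [← h2]; exact hj
            rw [w_negsucc] at this
            have := tri_strictMono.injective (this.trans hn₀.symm)
            omega
        rcases hor with rfl | rfl
        · rw [if_pos rfl, if_neg (by omega), add_zero]
        · rw [if_pos rfl, if_neg (by omega), zero_add]
      · rw [if_neg hj, if_neg, if_neg, add_zero]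
        · intro hc
          apply hj
          rw [hc, w_negsucc]
          exact hn₀
        · intro hc
          apply hj
          rw [hc, w_nat]
          exact hn₀
    rw [Finset.sum_congr rfl hL, Finset.sum_add_distrib, hR]
    rw [Finset.sum_ite_eq' _ ((n₀:ℤ)) (fun j => (-t)^j),
      Finset.sum_ite_eq' _ (-(n₀:ℤ)-1) (fun j => (-t)^j),
      if_pos (by rw [mem_Icc]; push_cast; omega), if_pos (by rw [mem_Icc]; push_cast; omega)]
    exact scalar_id n₀
  · push_neg at hex
    rw [Finset.sum_eq_zero, Finset.sum_eq_zero, mul_zero]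
    · intro n _
      exact if_neg (hex n)
    · intro j _
      rw [if_neg]
      intro hc
      rcases le_or_gt 0 j with h | h
      · have : w ((j.toNat : ℤ)) = d := by rw [Int.toNat_of_nonneg h]; exact hc
        rw [w_nat] at this
        exact hex _ this
      · have h2 : j = -(((-j-1).toNat : ℤ)) - 1 := by omega
        have : w (-(((-j-1).toNat : ℤ)) - 1) = d := by rw [← h2]; exact hc
        rw [w_negsucc] at this
        exact hex _ this

lemma coeff_sum_fL (d : ℕ) :
    PowerSeries.coeff d (∑ n ∈ range (d+1),
        ((-1 : PowerSeries K)^(n+1) * (X:PowerSeries K)^((n+1).choose 2)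
          * PowerSeries.C (R := K) ((t^(n+1) - (t^n)⁻¹)/(1-t))))
      = ∑ n ∈ range (d+1), (if (n+1).choose 2 = d
          then ((-1:K)^(n+1) * ((t^(n+1) - (t^n)⁻¹)/(1-t))) else 0) := by
  rw [map_sum]
  apply Finset.sum_congr rfl
  intro n _
  rw [hfC, coeff_C_mul_X_pow]
  exact if_congr eq_comm rfl rfl

lemma tail_dvd (d lo hi : ℕ) (c : K) (h : d ≤ lo) :
    (X:PowerSeries K)^(d+1)
      ∣ (∏ k ∈ Ico lo hi, (1 - PowerSeries.C (R := K) c * (X:PowerSeries K)^(k+1))) - 1 := by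
  apply dvd_sub_one_prod
  intro k hk
  simp only [mem_Ico] at hk
  rw [show (1:PowerSeries K) - PowerSeries.C (R := K) c * X^(k+1) - 1
      = -(PowerSeries.C (R := K) c * X^(k+1)) by ring]
  exact ((pow_dvd_pow (X:PowerSeries K) (by omega)).mul_left _).neg_right

lemma key_cong (d : ℕ) :
    (X:PowerSeries K)^(d+1)
      ∣ D (d+1) * (∏ k ∈ range (2*d+2),
          ((1 + PowerSeries.C (R := K) (-t) * (X:PowerSeries K)^(k+1))
            * (1 + PowerSeries.C (R := K) (-t)⁻¹ * (X:PowerSeries K)^k)))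
        - PowerSeries.C (R := K) (1-t⁻¹) * (D (d+1)
            * (∏ k ∈ range (d+1), (1 - PowerSeries.C (R := K) t * (X:PowerSeries K)^(k+1)))
            * (∏ k ∈ range (d+1), (1 - PowerSeries.C (R := K) t⁻¹ * (X:PowerSeries K)^(k+1)))) := by
  have hB : ∏ k ∈ range (2*d+2), (1 + PowerSeries.C (R := K) (-t) * (X:PowerSeries K)^(k+1))
      = (∏ k ∈ range (d+1), (1 - PowerSeries.C (R := K) t * (X:PowerSeries K)^(k+1)))
        * (∏ k ∈ Ico (d+1) (2*d+2), (1 - PowerSeries.C (R := K) t * (X:PowerSeries K)^(k+1))) := by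
    rw [Finset.prod_range_mul_prod_Ico _ (by omega : d+1 ≤ 2*d+2)]
    exact Finset.prod_congr rfl fun k _ => by rw [map_neg]; ring
  have hC : ∏ k ∈ range (2*d+2), (1 + PowerSeries.C (R := K) (-t)⁻¹ * (X:PowerSeries K)^k)
      = ((∏ k ∈ range (d+1), (1 - PowerSeries.C (R := K) t⁻¹ * (X:PowerSeries K)^(k+1)))
          * (∏ k ∈ Ico (d+1) (2*d+1), (1 - PowerSeries.C (R := K) t⁻¹ * (X:PowerSeries K)^(k+1))))
        * PowerSeries.C (R := K) (1-t⁻¹) := by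
    calc ∏ k ∈ range (2*d+2), (1 + PowerSeries.C (R := K) (-t)⁻¹ * (X:PowerSeries K)^k)
        = ∏ k ∈ range (2*d+1+1), (1 - PowerSeries.C (R := K) t⁻¹ * (X:PowerSeries K)^k) := by
          refine Finset.prod_congr (by norm_num) fun k _ => ?_
          rw [inv_neg, map_neg]
          ring
      _ = (∏ k ∈ range (2*d+1), (1 - PowerSeries.C (R := K) t⁻¹ * (X:PowerSeries K)^(k+1)))
          * (1 - PowerSeries.C (R := K) t⁻¹ * (X:PowerSeries K)^0) := Finset.prod_range_succ' _ _
      _ = _ := by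
          rw [← Finset.prod_range_mul_prod_Ico
              (fun k => 1 - PowerSeries.C (R := K) t⁻¹ * (X:PowerSeries K)^(k+1))
              (by omega : d+1 ≤ 2*d+1),
            pow_zero, mul_one, map_sub, map_one]
  have hTB := tail_dvd d (d+1) (2*d+2) t (by omega)
  have hTC := tail_dvd d (d+1) (2*d+1) t⁻¹ (by omega)
  have heq : D (d+1) * (∏ k ∈ range (2*d+2),
          ((1 + PowerSeries.C (R := K) (-t) * (X:PowerSeries K)^(k+1))
            * (1 + PowerSeries.C (R := K) (-t)⁻¹ * (X:PowerSeries K)^k)))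
        - PowerSeries.C (R := K) (1-t⁻¹) * (D (d+1)
            * (∏ k ∈ range (d+1), (1 - PowerSeries.C (R := K) t * (X:PowerSeries K)^(k+1)))
            * (∏ k ∈ range (d+1), (1 - PowerSeries.C (R := K) t⁻¹ * (X:PowerSeries K)^(k+1))))
      = (PowerSeries.C (R := K) (1-t⁻¹) * (D (d+1)
            * (∏ k ∈ range (d+1), (1 - PowerSeries.C (R := K) t * (X:PowerSeries K)^(k+1)))
            * (∏ k ∈ range (d+1), (1 - PowerSeries.C (R := K) t⁻¹ * (X:PowerSeries K)^(k+1)))))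
        * ((∏ k ∈ Ico (d+1) (2*d+2), (1 - PowerSeries.C (R := K) t * (X:PowerSeries K)^(k+1)))
            * (∏ k ∈ Ico (d+1) (2*d+1), (1 - PowerSeries.C (R := K) t⁻¹ * (X:PowerSeries K)^(k+1)))
          - 1) := by
    rw [Finset.prod_mul_distrib, hB, hC]
    ring
  rw [heq]
  apply Dvd.dvd.mul_left
  have e2 : (∏ k ∈ Ico (d+1) (2*d+2), (1 - PowerSeries.C (R := K) t * (X:PowerSeries K)^(k+1)))
        * (∏ k ∈ Ico (d+1) (2*d+1), (1 - PowerSeries.C (R := K) t⁻¹ * (X:PowerSeries K)^(k+1))) - 1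
      = (∏ k ∈ Ico (d+1) (2*d+2), (1 - PowerSeries.C (R := K) t * (X:PowerSeries K)^(k+1)))
        * ((∏ k ∈ Ico (d+1) (2*d+1), (1 - PowerSeries.C (R := K) t⁻¹ * (X:PowerSeries K)^(k+1))) - 1)
      + ((∏ k ∈ Ico (d+1) (2*d+2), (1 - PowerSeries.C (R := K) t * (X:PowerSeries K)^(k+1))) - 1) := by
    ring
  rw [e2]
  exact dvd_add (hTC.mul_left _) hTB

/-- The specialized Macdonald identity from 2-cores (Jacobi triple product form):
`Σ_{n≥1} (−1)^n T^{C(n,2)} (t^n − t^{1−n})/(1 − t) = (T;T)_∞ (tT;T)_∞ (T/t;T)_∞`,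
as formal power series in `T` over `ℚ(t)`, with `(a;T)_∞ = Π_{k≥0}(1 − a T^k)`. -/
theorem jacobi_triple_product_twoCores :
    ∑' n : ℕ,
        ((-1 : PowerSeries K) ^ (n + 1) * (PowerSeries.X : PowerSeries K) ^ ((n + 1).choose 2) *
          PowerSeries.C (R := K) ((t ^ (n + 1) - (t ^ n)⁻¹) / (1 - t)))
      = (∏' k : ℕ, (1 - (PowerSeries.X : PowerSeries K) ^ (k + 1))) *
        (∏' k : ℕ, (1 - PowerSeries.C (R := K) t * (PowerSeries.X : PowerSeries K) ^ (k + 1))) *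
        (∏' k : ℕ, (1 - PowerSeries.C (R := K) t⁻¹ * (PowerSeries.X : PowerSeries K) ^ (k + 1))) := by
  have hx : (-t : K) ≠ 0 := neg_ne_zero.mpr t_ne_zero
  have hSum : HasSum (fun n : ℕ =>
      ((-1 : PowerSeries K) ^ (n + 1) * (PowerSeries.X : PowerSeries K) ^ ((n + 1).choose 2) *
          PowerSeries.C (R := K) ((t ^ (n + 1) - (t ^ n)⁻¹) / (1 - t))))
      (slimit (fun n : ℕ =>
      ((-1 : PowerSeries K) ^ (n + 1) * (PowerSeries.X : PowerSeries K) ^ ((n + 1).choose 2) *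
          PowerSeries.C (R := K) ((t ^ (n + 1) - (t ^ n)⁻¹) / (1 - t))))) := by
    apply hasSum_of
    intro n e he
    rw [hfC, coeff_C_mul_X_pow, if_neg]
    have := n_le_tri n
    omega
  have hgA : ∀ k : ℕ, (X:PowerSeries K)^(k+1)
      ∣ (1 - (PowerSeries.X : PowerSeries K) ^ (k + 1)) - 1 := by
    intro k
    rw [show (1:PowerSeries K) - X^(k+1) - 1 = -(X^(k+1)) by ring]
    exact (dvd_refl _).neg_right
  have hgB : ∀ k : ℕ, (X:PowerSeries K)^(k+1)
      ∣ (1 - PowerSeries.C (R := K) t * (PowerSeries.X : PowerSeries K) ^ (k + 1)) - 1 := by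
    intro k
    rw [show (1:PowerSeries K) - PowerSeries.C (R := K) t * X^(k+1) - 1
        = -(PowerSeries.C (R := K) t * X^(k+1)) by ring]
    exact ((dvd_refl _).mul_left _).neg_right
  have hgC : ∀ k : ℕ, (X:PowerSeries K)^(k+1)
      ∣ (1 - PowerSeries.C (R := K) t⁻¹ * (PowerSeries.X : PowerSeries K) ^ (k + 1)) - 1 := by
    intro k
    rw [show (1:PowerSeries K) - PowerSeries.C (R := K) t⁻¹ * X^(k+1) - 1
        = -(PowerSeries.C (R := K) t⁻¹ * X^(k+1)) by ring]
    exact ((dvd_refl _).mul_left _).neg_right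
  rw [hSum.tsum_eq,
    (hasProd_of (fun k : ℕ => 1 - (PowerSeries.X : PowerSeries K) ^ (k + 1)) hgA).tprod_eq,
    (hasProd_of (fun k : ℕ =>
      1 - PowerSeries.C (R := K) t * (PowerSeries.X : PowerSeries K) ^ (k + 1)) hgB).tprod_eq,
    (hasProd_of (fun k : ℕ =>
      1 - PowerSeries.C (R := K) t⁻¹ * (PowerSeries.X : PowerSeries K) ^ (k + 1)) hgC).tprod_eq]
  apply PowerSeries.ext
  intro d
  have h2 := coeff_eq_of_dvd (d := d) (dvd_sub_mul (dvd_sub_mul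
    (plimit_dvd _ hgA (d+1)) (plimit_dvd _ hgB (d+1))) (plimit_dvd _ hgC (d+1)))
  rw [h2]
  simp only [slimit, coeff_mk]
  apply mul_left_cancel₀ one_sub_tinv_ne
  rw [coeff_sum_fL d, ← pairing d,
    sum_shift (-((2*d+2:ℕ):ℤ)) ((2*d+2:ℕ):ℤ) ((2*d+2:ℕ):ℤ)
      (fun j => if w j = d then (-t)^j else 0),
    show -((2*d+2:ℕ):ℤ)+((2*d+2:ℕ):ℤ) = 0 by ring,
    show ((2*d+2:ℕ):ℤ)+((2*d+2:ℕ):ℤ) = 2*((2*d+2:ℕ):ℤ) by ring]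
  have h3 : ∑ k ∈ Icc (0:ℤ) (2*((2*d+2:ℕ):ℤ)),
        (fun j => if w j = d then (-t)^j else 0) (k - ((2*d+2:ℕ):ℤ))
      = ∑ k ∈ Icc (0:ℤ) (2*((2*d+2:ℕ):ℤ)),
        PowerSeries.coeff d (D (d+1) * Fm (-t) (2*d+2) k) := by
    apply Finset.sum_congr rfl
    intro k hk
    simp only [mem_Icc] at hk
    exact (hterm d k hk.1 hk.2).symm
  rw [h3, ← map_sum, ← Finset.mul_sum, ← finJTP (-t) hx (2*d+2),
    coeff_eq_of_dvd (key_cong d), PowerSeries.coeff_C_mul]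
  rfl

end JTP
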